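/- Let A, B be n×n matrices and G a generalized inverse of A with projections P₁ = GA, P₂ = AG. If there exists a matrix X with Aᵀ X - Xᵀ A = B, then Bᵀ = -B and (1 - P₁ᵀ) B (1 - P₁) = 0. -/
import Mathlib


/-- Necessity of conditions (C1) and (C2): if `Aᵀ X - Xᵀ A = B` has a solution `X`,
then `Bᵀ = -B` and `(1 - P₁ᵀ) B (1 - P₁) = 0`, where `P₁ = G*A` for a generalized
inverse `G` of `A`. -/
theorem matrixeqn_necessary_conditions {n : ℕ} {F : Type*} [Field F]
    (hchar : (2 : F) ≠ 0)
    (A B X G : Matrix (Fin n) (Fin n) F)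
    (h1 : A * G * A = A) (h2 : G * A * G = G)
    (hX : A.transpose * X - X.transpose * A = B) :
    B.transpose = -B ∧
      (1 - (G * A).transpose) * B * (1 - G * A) = 0 := by
  subst hX
  constructor
  · simp [Matrix.transpose_sub, Matrix.transpose_mul]
  · have hA0 : A * (1 - G * A) = 0 := by
      rw [Matrix.mul_sub, Matrix.mul_one, ← Matrix.mul_assoc, h1, sub_self]
    have hA0' : (1 - (G * A).transpose) * A.transpose = 0 := by
      have := congrArg Matrix.transpose hA0
      simpa [Matrix.transpose_sub, Matrix.transpose_mul] using this
    have key : (1 - (G * A).transpose) * (A.transpose * X - X.transpose * A) * (1 - G * A)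
        = (1 - (G * A).transpose) * A.transpose * (X * (1 - G * A))
          - (1 - (G * A).transpose) * X.transpose * (A * (1 - G * A)) := by
      noncomm_ring
    rw [key, hA0, hA0', Matrix.zero_mul, Matrix.mul_zero, sub_self]
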